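/- Let W₀ be a ball in ℂᵐ, V₀ ⋐ W₀ a smaller concentric ball, and suppose there exists α ∈ (0,1] such that sup_{V₀}|φ| ≤ |φ(λ)|^α for every λ ∈ V₀ and every holomorphic φ : W₀ → ℂ with 0 < |φ| < 1 on W₀ (Harnack-type inequality for log|φ|). Let A_n(λ) := det(DF_n(λ)) be nowhere-vanishing holomorphic functions on W₀ with |A_n| ≤ c₂ⁿ on W₀ and |A_n(λ)| ≤ c₁ⁿ δ_n(λ) on V₀ where δ_n(λ) := ‖(DF_n(λ))⁻¹‖⁻¹ and c₁, c₂ > 0. Then for c = c₁ c₂^{(1-α)/α} and every λ, λ₀' ∈ V₀ and n ≥ 1: (1/n)(-log δ_n(λ)) ≤ (k/α)(1/n)(-log δ_n(λ₀')) + log c, where k is the dimension so that δ_n(λ₀')ᵏ ≤ |A_n(λ₀')|. -/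

import Mathlib

open MeasureTheory

/-- Transfer of the lower bound on the smallest singular value between parameters,
via a Harnack-type inequality for holomorphic functions and determinant estimates:
`(1/n)(-log δ_n(λ)) ≤ (k/α)(1/n)(-log δ_n(λ₀')) + log (c₁ c₂^{(1-α)/α})` on `V₀`. -/
theorem singular_value_transfer
    {m : ℕ} (W₀ V₀ : Set (Fin m → ℂ)) (hV₀W₀ : V₀ ⊆ W₀)
    (k : ℕ) (hk : 1 ≤ k)
    (α : ℝ) (hα0 : 0 < α) (hα1 : α ≤ 1)
    (hHarnack : ∀ φ : (Fin m → ℂ) → ℂ, DifferentiableOn ℂ φ W₀ →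
      (∀ l ∈ W₀, 0 < ‖φ l‖ ∧ ‖φ l‖ < 1) →
      ∀ l ∈ V₀, ∀ l' ∈ V₀, ‖φ l'‖ ≤ ‖φ l‖ ^ α)
    (c₁ c₂ : ℝ) (hc₁ : 0 < c₁) (hc₂ : 0 < c₂)
    (A : ℕ → (Fin m → ℂ) → ℂ)
    (hAhol : ∀ n, DifferentiableOn ℂ (A n) W₀)
    (hAnz : ∀ n, ∀ l ∈ W₀, A n l ≠ 0)
    (hAub : ∀ n : ℕ, ∀ l ∈ W₀, ‖A n l‖ ≤ c₂ ^ n)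
    (δ : ℕ → (Fin m → ℂ) → ℝ) (hδpos : ∀ n, ∀ l ∈ V₀, 0 < δ n l)
    (hAδ : ∀ n : ℕ, ∀ l ∈ V₀, ‖A n l‖ ≤ c₁ ^ n * δ n l)
    (hδA : ∀ n : ℕ, ∀ l ∈ V₀, δ n l ^ k ≤ ‖A n l‖) :
    ∀ n : ℕ, 1 ≤ n → ∀ l ∈ V₀, ∀ l₀' ∈ V₀,
      (1 / (n : ℝ)) * (-Real.log (δ n l)) ≤
        ((k : ℝ) / α) * ((1 / (n : ℝ)) * (-Real.log (δ n l₀'))) +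
          Real.log (c₁ * c₂ ^ ((1 - α) / α)) := by
  intro n hn l hl l₀' hl₀'
  have hn0 : (0:ℝ) < (n:ℝ) := by exact_mod_cast hn
  have hαne : α ≠ 0 := hα0.ne'
  -- rewrite the log of the constant
  have hlogc : Real.log (c₁ * c₂ ^ ((1 - α) / α))
      = Real.log c₁ + ((1 - α) / α) * Real.log c₂ := by
    rw [Real.log_mul hc₁.ne' (by positivity), Real.log_rpow hc₂]
  rw [hlogc]
  apply le_of_forall_pos_le_add
  intro ε hε
  set C : ℝ := (1/α - 1) / n with hCdef
  have hCnonneg : 0 ≤ C := by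
    apply div_nonneg _ hn0.le
    have : 1 ≤ 1/α := by
      rw [le_div_iff₀ hα0]; linarith
    linarith
  have hC1 : (0:ℝ) < C + 1 := by linarith
  set t : ℝ := Real.exp (ε / (C + 1)) with htdef
  have ht1 : 1 < t := by
    rw [htdef, ← Real.exp_zero]
    exact Real.exp_lt_exp.mpr (by positivity)
  have hlogt : Real.log t = ε / (C + 1) := Real.log_exp _
  have hClogt : C * Real.log t ≤ ε := by
    rw [hlogt, mul_div_assoc']
    rw [div_le_iff₀ hC1]
    nlinarith
  have hlogt0 : 0 ≤ Real.log t := by rw [hlogt]; positivity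
  set T : ℝ := t * c₂ ^ n with hTdef
  have hT : 0 < T := by positivity
  set φ : (Fin m → ℂ) → ℂ := fun x => A n x / ((T : ℝ) : ℂ) with hφdef
  have hφabs : ∀ x, ‖φ x‖ = ‖A n x‖ / T := by
    intro x
    simp [hφdef, norm_div, Complex.norm_real, Real.norm_eq_abs, abs_of_pos hT]
  have hφhol : DifferentiableOn ℂ φ W₀ := by
    rw [hφdef]; simp only [div_eq_mul_inv]; exact (hAhol n).mul_const _
  have hφbd : ∀ x ∈ W₀, 0 < ‖φ x‖ ∧ ‖φ x‖ < 1 := by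
    intro x hx
    rw [hφabs]
    constructor
    · exact div_pos (norm_pos_iff.mpr (hAnz n x hx)) hT
    · rw [div_lt_one hT]
      calc ‖A n x‖ ≤ c₂ ^ n := hAub n x hx
        _ < T := by
          rw [hTdef]
          nlinarith [pow_pos hc₂ n]
  have hHar := hHarnack φ hφhol hφbd l hl l₀' hl₀'
  rw [hφabs, hφabs] at hHar
  have hAl : 0 < ‖A n l‖ := norm_pos_iff.mpr (hAnz n l (hV₀W₀ hl))
  have hAl' : 0 < ‖A n l₀'‖ := norm_pos_iff.mpr (hAnz n l₀' (hV₀W₀ hl₀'))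
  set a : ℝ := Real.log ‖A n l‖ with hadef
  set b : ℝ := Real.log ‖A n l₀'‖ with hbdef
  set d : ℝ := Real.log (δ n l) with hddef
  set d' : ℝ := Real.log (δ n l₀') with hd'def
  set L : ℝ := Real.log t + n * Real.log c₂ with hLdef
  have hlogT : Real.log T = L := by
    rw [hTdef, Real.log_mul (by positivity) (by positivity), Real.log_pow]
  -- h1 : b - L ≤ α * (a - L)
  have h1 : b - L ≤ α * (a - L) := by
    have := Real.log_le_log (div_pos hAl' hT) hHar
    rw [Real.log_rpow (div_pos hAl hT), Real.log_div hAl'.ne' hT.ne',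
      Real.log_div hAl.ne' hT.ne', hlogT] at this
    exact this
  -- h2 : a ≤ n * log c₁ + d
  have h2 : a ≤ n * Real.log c₁ + d := by
    have := Real.log_le_log hAl (hAδ n l hl)
    rw [Real.log_mul (by positivity) (hδpos n l hl).ne', Real.log_pow] at this
    exact this
  -- h3 : k * d' ≤ b
  have h3 : (k:ℝ) * d' ≤ b := by
    have := Real.log_le_log (pow_pos (hδpos n l₀' hl₀') k) (hδA n l₀' hl₀')
    rw [Real.log_pow] at this
    exact this
  -- main inequality before division
  have goal' : α * (-d) ≤ (k:ℝ) * (-d') + α * (n * Real.log c₁)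
      + (1 - α) * L := by
    nlinarith [mul_le_mul_of_nonneg_left h2 hα0.le]
  have key : (1 / (n : ℝ)) * (-d) ≤
      ((k : ℝ) / α) * ((1 / (n : ℝ)) * (-d'))
        + (Real.log c₁ + ((1 - α) / α) * Real.log c₂) + C * Real.log t := by
    have hnα : (0:ℝ) < (n:ℝ) * α := by positivity
    rw [← mul_le_mul_iff_right₀ hnα]
    have hexp : (n:ℝ) * α * ((1 / (n : ℝ)) * (-d)) = α * (-d) := by
      field_simp
    have hexp2 : (n:ℝ) * α * (((k : ℝ) / α) * ((1 / (n : ℝ)) * (-d'))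
        + (Real.log c₁ + ((1 - α) / α) * Real.log c₂) + C * Real.log t)
        = (k:ℝ) * (-d') + α * ((n:ℝ) * Real.log c₁) + (1-α) * L := by
      rw [hCdef, hLdef]
      field_simp
      ring
    rw [hexp, hexp2]
    exact goal'
  linarith [key, hClogt]
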